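/- The number of partitions of n into distinct parts with largest part k equals the number of partitions of n into odd parts such that the largest part plus twice the number of parts equals 2k+1. -/

import Mathlib

open Nat

/-- The parts of a partition listed in nonincreasing order. -/
def sortedParts {n : ℕ} (p : n.Partition) : List ℕ := (p.parts.sort (· ≤ ·)).reverse

/-- `lo p` is the number of odd parts of `p` (with multiplicity). -/
def lo {n : ℕ} (p : n.Partition) : ℕ := (p.parts.filter (fun i => i % 2 = 1)).card

/-- `la p` is the alternating sum `λ₁ - λ₂ + λ₃ - ⋯` of the partition `p`. -/
def la {n : ℕ} (p : n.Partition) : ℤ :=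
  ∑ i ∈ Finset.range (sortedParts p).length, (-1 : ℤ) ^ i * ((sortedParts p).getD i 0 : ℤ)

/-- `nd p` is the number of distinct part-values of `p`. -/
def nd {n : ℕ} (p : n.Partition) : ℕ := p.parts.toFinset.card

/-- `no p` is the number of distinct part-values of `p` occurring with odd multiplicity. -/
def no {n : ℕ} (p : n.Partition) : ℕ :=
  (p.parts.toFinset.filter (fun a => p.parts.count a % 2 = 1)).card

/-- `nc p` is the number of chains (maximal runs of consecutive integers) of a
partition with distinct parts: parts `i` such that `i+1` is not a part. -/
def nc {n : ℕ} (p : n.Partition) : ℕ :=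
  (p.parts.toFinset.filter (fun i => i + 1 ∉ p.parts)).card

/-- `r2 p` is the number of parts of `p` congruent to 2 mod 4. -/
def r2 {n : ℕ} (p : n.Partition) : ℕ := (p.parts.filter (fun i => i % 4 = 2)).card

/-- Only even parts may be repeated. -/
def onlyEvenRepeats {n : ℕ} (p : n.Partition) : Prop :=
  ∀ i, 1 < p.parts.count i → 2 ∣ i

/-- Successive parts differ by at most 4, strictly less than 4 if either part is even,
and the smallest part is less than 4 (the class 𝒜₁ of Chen–Gao–Ji–Li). -/
def A1cond {n : ℕ} (p : n.Partition) : Prop :=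
  onlyEvenRepeats p ∧
  (∀ j, j + 1 < (sortedParts p).length →
    (sortedParts p).getD j 0 ≤ (sortedParts p).getD (j + 1) 0 + 4 ∧
    ((2 ∣ (sortedParts p).getD j 0 ∨ 2 ∣ (sortedParts p).getD (j + 1) 0) →
      (sortedParts p).getD j 0 < (sortedParts p).getD (j + 1) 0 + 4)) ∧
  (sortedParts p).getD ((sortedParts p).length - 1) 0 < 4

/-- No part divisible by 4 and only even parts repeated (the class 𝒜₂). -/
def A2cond {n : ℕ} (p : n.Partition) : Prop :=
  (∀ i ∈ p.parts, ¬ (4 ∣ i)) ∧ onlyEvenRepeats p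

/-- `loConj p` is the number of odd parts of the conjugate partition of `p`. -/
def loConj {n : ℕ} (p : n.Partition) : ℕ :=
  ((Finset.Icc 1 n).filter (fun i => (p.parts.filter (fun j => i ≤ j)).card % 2 = 1)).card

/-- count partitions of n whose parts satisfy Q -/
noncomputable def pc (n : ℕ) (Q : Multiset ℕ → Prop) : ℕ := Nat.card {p : n.Partition // Q p.parts}

lemma pc_congr {n : ℕ} {Q Q' : Multiset ℕ → Prop}
    (h : ∀ s : Multiset ℕ, s.sum = n → (∀ x ∈ s, 0 < x) → (Q s ↔ Q' s)) :
    pc n Q = pc n Q' :=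
  Nat.card_congr (Equiv.subtypeEquivRight fun p => h p.parts p.parts_sum (fun _ hx => p.parts_pos hx))

lemma pc_eq_zero {n : ℕ} {Q : Multiset ℕ → Prop}
    (h : ∀ s : Multiset ℕ, s.sum = n → (∀ x ∈ s, 0 < x) → ¬ Q s) : pc n Q = 0 := by
  have : IsEmpty {p : n.Partition // Q p.parts} :=
    ⟨fun x => h x.1.parts x.1.parts_sum (fun _ hx => x.1.parts_pos hx) x.2⟩
  simp [pc, Nat.card_of_isEmpty]

lemma pc_split (n : ℕ) (Q R : Multiset ℕ → Prop) :
    pc n Q = pc n (fun s => Q s ∧ R s) + pc n (fun s => Q s ∧ ¬ R s) := by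
  classical
  have e : {p : n.Partition // Q p.parts ∧ R p.parts} ⊕ {p : n.Partition // Q p.parts ∧ ¬ R p.parts}
      ≃ {p : n.Partition // Q p.parts} :=
    ((Equiv.subtypeSubtypeEquivSubtypeInter _ _).symm.sumCongr
      (Equiv.subtypeSubtypeEquivSubtypeInter (fun p : n.Partition => Q p.parts)
        (fun p => ¬ R p.parts)).symm).trans
      (Equiv.sumCompl fun x : {p : n.Partition // Q p.parts} => R x.1.parts)
  rw [pc, pc, pc, ← Nat.card_congr e, Nat.card_sum]


lemma partitionZero_parts (p : (0:ℕ).Partition) : p.parts = 0 := by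
  rw [Multiset.eq_zero_iff_forall_notMem]
  intro x hx
  have h1 := p.parts_pos hx
  have h2 : x ≤ p.parts.sum := Multiset.le_sum_of_mem hx
  rw [p.parts_sum] at h2
  omega

lemma pc_zero_pos {Q : Multiset ℕ → Prop} (h : Q 0) : pc 0 Q = 1 := by
  have : Nonempty {p : (0:ℕ).Partition // Q p.parts} := ⟨⟨⟨0, by simp, by simp⟩, h⟩⟩
  have hsub : Subsingleton {p : (0:ℕ).Partition // Q p.parts} := by
    constructor
    intro a b
    apply Subtype.ext
    apply Nat.Partition.ext
    rw [partitionZero_parts a.1, partitionZero_parts b.1]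
  exact Nat.card_unique

lemma pc_zero_neg {Q : Multiset ℕ → Prop} (h : ¬ Q 0) : pc 0 Q = 0 := by
  apply pc_eq_zero
  intro s hs hpos
  have : s = 0 := by
    rw [Multiset.eq_zero_iff_forall_notMem]
    intro x hx
    have h2 : x ≤ s.sum := Multiset.le_sum_of_mem hx
    have := hpos x hx
    omega
  rwa [this]

-- the cons/erase equivalence
lemma pc_erase {n : ℕ} (a : ℕ) (ha : 0 < a) (han : a ≤ n) (Q : Multiset ℕ → Prop) :
    pc n (fun s => a ∈ s ∧ Q s) = pc (n - a) (fun s => Q (a ::ₘ s)) := by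
  apply Nat.card_congr
  refine ⟨fun p => ⟨⟨p.1.parts.erase a, ?_, ?_⟩, ?_⟩, fun q => ⟨⟨a ::ₘ q.1.parts, ?_, ?_⟩, ?_, ?_⟩, ?_, ?_⟩
  · intro i hi
    exact p.1.parts_pos (Multiset.mem_of_mem_erase hi)
  · have hc := Multiset.cons_erase p.2.1
    have := p.1.parts_sum
    have : a + (p.1.parts.erase a).sum = n := by
      rw [← Multiset.sum_cons, hc, p.1.parts_sum]
    omega
  · show Q _
    have hc := Multiset.cons_erase p.2.1
    rw [hc]
    exact p.2.2
  · intro i hi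
    rcases Multiset.mem_cons.mp hi with h | h
    · omega
    · exact q.1.parts_pos h
  · rw [Multiset.sum_cons, q.1.parts_sum]
    omega
  · exact Multiset.mem_cons_self a _
  · exact q.2
  · intro p
    apply Subtype.ext
    apply Nat.Partition.ext
    exact Multiset.cons_erase p.2.1
  · intro q
    apply Subtype.ext
    apply Nat.Partition.ext
    exact Multiset.erase_cons_head a q.1.parts

def down (c : ℕ) (s : Multiset ℕ) : Multiset ℕ := (s.map fun x => (x-1)/c).filter (fun y => y ≠ 0)
def up (c e : ℕ) (s : Multiset ℕ) : Multiset ℕ :=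
  (s.map fun y => c*y+1) + Multiset.replicate (e - Multiset.card s) 1

lemma sum_map_affine (c : ℕ) (s : Multiset ℕ) :
    (s.map fun y => c*y+1).sum = c * s.sum + Multiset.card s := by
  induction s using Multiset.induction with
  | empty => simp
  | cons x s ih => simp [ih]; ring


lemma down_sum (c : ℕ) (s : Multiset ℕ) (hd : ∀ x ∈ s, c ∣ x - 1) (hp : ∀ x ∈ s, 0 < x) :
    c * (down c s).sum + Multiset.card s = s.sum := by
  induction s using Multiset.induction with
  | empty => simp [down]
  | cons x s ih =>
    have hd' : ∀ y ∈ s, c ∣ y - 1 := fun y hy => hd y (Multiset.mem_cons_of_mem hy)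
    have hp' : ∀ y ∈ s, 0 < y := fun y hy => hp y (Multiset.mem_cons_of_mem hy)
    have ih' := ih hd' hp'
    have hx := hp x (Multiset.mem_cons_self x s)
    have hdx := hd x (Multiset.mem_cons_self x s)
    simp only [down, Multiset.map_cons, Multiset.filter_cons, Multiset.sum_cons,
      Multiset.card_cons] at *
    by_cases h1 : (x-1)/c = 0
    · have hx1 : x = 1 := by
        by_contra hne
        have hx2 : 0 < x - 1 := by omega
        have hc : 0 < c := by
          rcases Nat.eq_zero_or_pos c with h | h
          · subst h; rw [Nat.zero_dvd] at hdx; omega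
          · exact h
        have hle : c ≤ x - 1 := Nat.le_of_dvd hx2 hdx
        have : 1 ≤ (x-1)/c := (Nat.one_le_div_iff hc).mpr hle
        omega
      subst hx1
      rw [if_neg (by simp), zero_add]
      push_cast
      linarith
    · rw [if_pos (by simpa using h1)]
      have hcd : c * ((x - 1) / c) = x - 1 := Nat.mul_div_cancel' hdx
      simp only [Multiset.singleton_add, Multiset.sum_cons]
      rw [Nat.mul_add]
      push_cast
      omega

lemma down_card_le (c : ℕ) (s : Multiset ℕ) : Multiset.card (down c s) ≤ Multiset.card s := by
  calc Multiset.card (down c s) ≤ Multiset.card (s.map fun x => (x-1)/c) :=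
        Multiset.card_le_card (Multiset.filter_le _ _)
    _ = Multiset.card s := Multiset.card_map _ _

lemma down_mem {c y : ℕ} {s : Multiset ℕ} (hy : y ∈ down c s) : ∃ x ∈ s, y = (x-1)/c ∧ y ≠ 0 := by
  rw [down, Multiset.mem_filter, Multiset.mem_map] at hy
  obtain ⟨⟨x, hx, hxy⟩, hy0⟩ := hy
  exact ⟨x, hx, hxy.symm, hy0⟩

lemma up_card {c e : ℕ} {s : Multiset ℕ} (h : Multiset.card s ≤ e) :
    Multiset.card (up c e s) = e := by
  simp [up]; omega

lemma up_sum {c e : ℕ} {s : Multiset ℕ} (h : Multiset.card s ≤ e) :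
    (up c e s).sum = c * s.sum + e := by
  rw [up, Multiset.sum_add, sum_map_affine, Multiset.sum_replicate, smul_eq_mul]
  omega

lemma up_mem {c e x : ℕ} {s : Multiset ℕ} (hx : x ∈ up c e s) :
    (∃ y ∈ s, x = c*y+1) ∨ x = 1 := by
  rw [up, Multiset.mem_add] at hx
  rcases hx with h | h
  · rw [Multiset.mem_map] at h
    obtain ⟨y, hy, hxy⟩ := h
    exact Or.inl ⟨y, hy, hxy.symm⟩
  · exact Or.inr (Multiset.eq_of_mem_replicate h)

lemma down_up (c e : ℕ) (hc : 0 < c) (s : Multiset ℕ) (hp : ∀ y ∈ s, 0 < y) :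
    down c (up c e s) = s := by
  rw [up, down, Multiset.map_add, Multiset.filter_add, Multiset.map_map, Multiset.map_replicate]
  have h1 : Multiset.map ((fun x => (x-1)/c) ∘ fun y => c*y+1) s = s := by
    rw [show ((fun x => (x-1)/c) ∘ fun y => c*y+1) = fun y => (c*y+1-1)/c from rfl]
    have : ∀ y ∈ s, (c*y+1-1)/c = y := by
      intro y _
      rw [Nat.add_sub_cancel, Nat.mul_div_cancel_left _ hc]
    calc Multiset.map (fun y => (c*y+1-1)/c) s = Multiset.map id s := Multiset.map_congr rfl this
      _ = s := Multiset.map_id s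
  rw [h1]
  have h2 : (1-1)/c = 0 := by simp
  rw [h2]
  have h3 : Multiset.filter (fun y => y ≠ 0) (Multiset.replicate (e - Multiset.card s) 0) = 0 := by
    rw [Multiset.filter_eq_nil]
    intro a ha
    have := Multiset.eq_of_mem_replicate ha
    simp [this]
  rw [h3, add_zero]
  rw [Multiset.filter_eq_self]
  intro a ha
  have := hp a ha
  omega

lemma up_down (c e : ℕ) (hc : 0 < c) (s : Multiset ℕ) (hp : ∀ x ∈ s, 0 < x)
    (hd : ∀ x ∈ s, c ∣ x - 1) (hcard : Multiset.card s = e) :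
    up c e (down c s) = s := by
  classical
  have hsplit : Multiset.filter (fun x => x ≠ 1) s + Multiset.filter (fun x => ¬ x ≠ 1) s = s :=
    Multiset.filter_add_not _ s
  -- down c s = map f (filter (≠1) s)
  have hdown : down c s = Multiset.map (fun x => (x-1)/c) (Multiset.filter (fun x => x ≠ 1) s) := by
    rw [down]
    nth_rewrite 1 [← hsplit]
    rw [Multiset.map_add, Multiset.filter_add]
    have e1 : Multiset.filter (fun y => y ≠ 0)
        (Multiset.map (fun x => (x-1)/c) (Multiset.filter (fun x => x ≠ 1) s)) =
        Multiset.map (fun x => (x-1)/c) (Multiset.filter (fun x => x ≠ 1) s) := by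
      rw [Multiset.filter_eq_self]
      intro y hy
      rw [Multiset.mem_map] at hy
      obtain ⟨x, hx, hxy⟩ := hy
      rw [Multiset.mem_filter] at hx
      have hx1 : 0 < x := hp x hx.1
      have hx2 : x ≠ 1 := hx.2
      have hx3 : c ∣ x - 1 := hd x hx.1
      have : c ≤ x - 1 := Nat.le_of_dvd (by omega) hx3
      have : 1 ≤ (x-1)/c := (Nat.one_le_div_iff hc).mpr this
      omega
    have e2 : Multiset.filter (fun y => y ≠ 0)
        (Multiset.map (fun x => (x-1)/c) (Multiset.filter (fun x => ¬ x ≠ 1) s)) = 0 := by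
      rw [Multiset.filter_eq_nil]
      intro y hy
      rw [Multiset.mem_map] at hy
      obtain ⟨x, hx, hxy⟩ := hy
      rw [Multiset.mem_filter] at hx
      have : x = 1 := by tauto
      simp [this] at hxy
      simp [← hxy]
    rw [e1, e2, add_zero]
  rw [up, hdown, Multiset.map_map]
  have h1 : Multiset.map ((fun y => c*y+1) ∘ fun x => (x-1)/c) (Multiset.filter (fun x => x ≠ 1) s)
      = Multiset.filter (fun x => x ≠ 1) s := by
    have : ∀ x ∈ Multiset.filter (fun x => x ≠ 1) s, ((fun y => c*y+1) ∘ fun x => (x-1)/c) x = x := by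
      intro x hx
      rw [Multiset.mem_filter] at hx
      have hx1 : 0 < x := hp x hx.1
      have hx3 : c ∣ x - 1 := hd x hx.1
      simp only [Function.comp_apply]
      rw [Nat.mul_div_cancel' hx3]
      omega
    calc Multiset.map _ _ = Multiset.map id (Multiset.filter (fun x => x ≠ 1) s) :=
          Multiset.map_congr rfl this
      _ = _ := Multiset.map_id _
  rw [h1]
  have hcards : Multiset.card (Multiset.filter (fun x => x ≠ 1) s)
      + Multiset.card (Multiset.filter (fun x => ¬ x ≠ 1) s) = e := by
    rw [← Multiset.card_add, hsplit, hcard]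
  have h2 : Multiset.card (Multiset.map (fun x => (x-1)/c) (Multiset.filter (fun x => x ≠ 1) s))
      = Multiset.card (Multiset.filter (fun x => x ≠ 1) s) := Multiset.card_map _ _
  rw [h2]
  have h3 : Multiset.replicate (e - Multiset.card (Multiset.filter (fun x => x ≠ 1) s)) 1
      = Multiset.filter (fun x => ¬ x ≠ 1) s := by
    have : e - Multiset.card (Multiset.filter (fun x => x ≠ 1) s)
        = Multiset.card (Multiset.filter (fun x => ¬ x ≠ 1) s) := by omega
    rw [this]
    symm
    rw [Multiset.eq_replicate_card]
    intro b hb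
    rw [Multiset.mem_filter] at hb
    tauto
  rw [h3, hsplit]

lemma pc_scale (c a e m : ℕ) (hc : 0 < c) :
    pc (c * m + e) (fun s => Multiset.card s = e ∧ (∀ x ∈ s, x ≤ c * a + 1) ∧ (∀ x ∈ s, c ∣ x - 1))
      = pc m (fun s => Multiset.card s ≤ e ∧ ∀ x ∈ s, x ≤ a) := by
  apply Nat.card_congr
  refine ⟨fun p => ⟨⟨down c p.1.parts, ?_, ?_⟩, ?_, ?_⟩,
          fun q => ⟨⟨up c e q.1.parts, ?_, ?_⟩, ?_, ?_, ?_⟩, ?_, ?_⟩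
  · intro y hy
    obtain ⟨x, hx, rfl, h0⟩ := down_mem hy
    exact Nat.pos_of_ne_zero h0
  · have h := down_sum c p.1.parts p.2.2.2 (fun x hx => p.1.parts_pos hx)
    rw [p.1.parts_sum, p.2.1] at h
    have : c * (down c p.1.parts).sum = c * m := by omega
    exact Nat.eq_of_mul_eq_mul_left hc this
  · show Multiset.card _ ≤ e
    have := down_card_le c p.1.parts
    rw [p.2.1] at this
    exact this
  · show ∀ y ∈ _, y ≤ a
    intro y hy
    obtain ⟨x, hx, rfl, h0⟩ := down_mem hy
    have hb := p.2.2.1 x hx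
    have : (x-1)/c ≤ (c*a)/c := Nat.div_le_div_right (by omega)
    rwa [Nat.mul_div_cancel_left _ hc] at this
  · intro x hx
    rcases up_mem hx with ⟨y, _, rfl⟩ | rfl
    · exact Nat.succ_pos _
    · exact Nat.one_pos
  · rw [up_sum q.2.1, q.1.parts_sum]
  · exact up_card q.2.1
  · intro x hx
    rcases up_mem hx with ⟨y, hy, rfl⟩ | rfl
    · have := q.2.2 y hy
      have : c * y ≤ c * a := Nat.mul_le_mul_left c this
      omega
    · omega
  · intro x hx
    rcases up_mem hx with ⟨y, hy, rfl⟩ | rfl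
    · simp
    · simp
  · intro p
    apply Subtype.ext
    apply Nat.Partition.ext
    exact up_down c e hc p.1.parts (fun x hx => p.1.parts_pos hx) p.2.2.2 p.2.1
  · intro q
    apply Subtype.ext
    apply Nat.Partition.ext
    exact down_up c e hc q.1.parts (fun x hx => q.1.parts_pos hx)

lemma card_le_sum_of_pos {s : Multiset ℕ} (h : ∀ x ∈ s, 0 < x) : Multiset.card s ≤ s.sum := by
  induction s using Multiset.induction with
  | empty => simp
  | cons x s ih =>
    have h1 := h x (Multiset.mem_cons_self x s)
    have h2 := ih (fun y hy => h y (Multiset.mem_cons_of_mem hy))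
    simp only [Multiset.card_cons, Multiset.sum_cons]
    omega

noncomputable def Bc (a b M : ℕ) : ℕ := pc M (fun s => Multiset.card s ≤ b ∧ ∀ x ∈ s, x ≤ a)
noncomputable def Cd (m N : ℕ) : ℕ := pc N (fun s => s.Nodup ∧ ∀ x ∈ s, x ≤ m)

lemma Bc_M_zero (a b : ℕ) : Bc a b 0 = 1 := pc_zero_pos (by simp)

lemma Bc_a_zero (b M : ℕ) (hM : M ≠ 0) : Bc 0 b M = 0 := by
  apply pc_eq_zero
  rintro s hs hpos ⟨_, hb⟩
  have hne : s ≠ 0 := fun h0 => hM (by rw [← hs, h0]; simp)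
  rcases Multiset.exists_mem_of_ne_zero hne with ⟨x, hx⟩
  have := hpos x hx
  have := hb x hx
  omega

lemma Bc_b_zero (a M : ℕ) (hM : M ≠ 0) : Bc a 0 M = 0 := by
  apply pc_eq_zero
  rintro s hs hpos ⟨hb, _⟩
  have hne : s ≠ 0 := fun h0 => hM (by rw [← hs, h0]; simp)
  rcases Multiset.exists_mem_of_ne_zero hne with ⟨x, hx⟩
  have := Multiset.card_pos.mpr hne
  omega

lemma Bc_succ_a (a b M : ℕ) :
    Bc (a+1) b M = Bc a b M
      + (if a+1 ≤ M ∧ 1 ≤ b then Bc (a+1) (b-1) (M - (a+1)) else 0) := by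
  rw [Bc, pc_split M _ (fun s => (a+1) ∈ s)]
  have h1 : pc M (fun s => (Multiset.card s ≤ b ∧ ∀ x ∈ s, x ≤ a+1) ∧ (a+1) ∉ s)
      = Bc a b M := by
    apply pc_congr
    intro s hs hpos
    constructor
    · rintro ⟨⟨hc, hb⟩, hm⟩
      refine ⟨hc, fun x hx => ?_⟩
      have := hb x hx
      have : x ≠ a+1 := fun h => hm (h ▸ hx)
      omega
    · rintro ⟨hc, hb⟩
      refine ⟨⟨hc, fun x hx => by have := hb x hx; omega⟩, fun hm => by have := hb _ hm; omega⟩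
  have h2 : pc M (fun s => (Multiset.card s ≤ b ∧ ∀ x ∈ s, x ≤ a+1) ∧ (a+1) ∈ s)
      = (if a+1 ≤ M ∧ 1 ≤ b then Bc (a+1) (b-1) (M - (a+1)) else 0) := by
    split_ifs with h
    · have := pc_erase (n := M) (a+1) (by omega) h.1
        (fun s => Multiset.card s ≤ b ∧ ∀ x ∈ s, x ≤ a+1)
      rw [pc_congr (fun s hs hpos => ?_), this, Bc]
      · apply pc_congr
        intro s hs hpos
        simp only [Multiset.card_cons, Multiset.mem_cons]
        constructor
        · rintro ⟨hc, hb⟩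
          exact ⟨by omega, fun x hx => hb x (Or.inr hx)⟩
        · rintro ⟨hc, hb⟩
          refine ⟨by omega, fun x hx => ?_⟩
          rcases hx with rfl | hx
          · omega
          · exact hb x hx
      · tauto
    · apply pc_eq_zero
      rintro s hs hpos ⟨⟨hc, _⟩, hm⟩
      have h3 := Multiset.le_sum_of_mem hm
      have hne : s ≠ 0 := fun h0 => by simp [h0] at hm
      have h4 := Multiset.card_pos.mpr hne
      rw [hs] at h3
      omega
  omega

lemma Bc_succ_b (a b M : ℕ) :
    Bc a (b+1) M = Bc a b M
      + (if b+1 ≤ M ∧ 1 ≤ a then Bc (a-1) (b+1) (M - (b+1)) else 0) := by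
  rw [Bc, pc_split M _ (fun s => Multiset.card s ≤ b)]
  have h1 : pc M (fun s => (Multiset.card s ≤ b+1 ∧ ∀ x ∈ s, x ≤ a) ∧ Multiset.card s ≤ b)
      = Bc a b M := pc_congr (fun s hs hpos => by constructor <;> rintro ⟨h1, h2⟩ <;> tauto)
  have h2 : pc M (fun s => (Multiset.card s ≤ b+1 ∧ ∀ x ∈ s, x ≤ a) ∧ ¬ Multiset.card s ≤ b)
      = (if b+1 ≤ M ∧ 1 ≤ a then Bc (a-1) (b+1) (M - (b+1)) else 0) := by
    split_ifs with h
    · have hM : M = 1 * (M - (b+1)) + (b+1) := by omega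
      have hsc := pc_scale 1 (a-1) (b+1) (M - (b+1)) Nat.one_pos
      rw [pc_congr (fun s hs hpos => ?_), ← hM] at hsc
      · rw [hsc, Bc]
      · constructor
        · rintro ⟨hc, hb, _⟩
          exact ⟨⟨by omega, fun x hx => by have := hb x hx; omega⟩, by omega⟩
        · rintro ⟨⟨hc, hb⟩, hc2⟩
          exact ⟨by omega, fun x hx => by have := hb x hx; omega, fun x hx => one_dvd _⟩
    · apply pc_eq_zero
      rintro s hs hpos ⟨⟨hc, hb⟩, hc2⟩
      have h3 := card_le_sum_of_pos hpos
      rw [hs] at h3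
      rcases Nat.lt_or_ge a 1 with ha | ha
      · have : a = 0 := by omega
        subst this
        have hne : s ≠ 0 := fun h0 => by rw [h0] at hc2; simp at hc2
        rcases Multiset.exists_mem_of_ne_zero hne with ⟨x, hx⟩
        have := hpos x hx
        have := hb x hx
        omega
      · omega
  omega

lemma Bc_symm (a b M : ℕ) : Bc a b M = Bc b a M := by
  have key : ∀ n a b M, a + b ≤ n → Bc a b M = Bc b a M := by
    intro n
    induction n with
    | zero =>
      intro a b M h
      have : a = 0 ∧ b = 0 := by omega
      rw [this.1, this.2]
    | succ n ih =>
      intro a b M h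
      rcases Nat.eq_zero_or_pos a with rfl | ha
      · rcases Nat.eq_zero_or_pos M with rfl | hM
        · rw [Bc_M_zero, Bc_M_zero]
        · rw [Bc_a_zero _ _ (by omega), Bc_b_zero _ _ (by omega)]
      rcases Nat.eq_zero_or_pos b with rfl | hb
      · rcases Nat.eq_zero_or_pos M with rfl | hM
        · rw [Bc_M_zero, Bc_M_zero]
        · rw [Bc_b_zero _ _ (by omega), Bc_a_zero _ _ (by omega)]
      obtain ⟨a, rfl⟩ : ∃ a', a = a' + 1 := ⟨a - 1, by omega⟩
      obtain ⟨b, rfl⟩ : ∃ b', b = b' + 1 := ⟨b - 1, by omega⟩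
      rw [Bc_succ_a a (b+1) M, Bc_succ_b (b+1) a M]
      have e1 : Bc a (b+1) M = Bc (b+1) a M := ih a (b+1) M (by omega)
      have e2 : Bc (a+1) b (M - (a+1)) = Bc b (a+1) (M - (a+1)) := ih (a+1) b _ (by omega)
      rw [e1]
      congr 1
      split_ifs with h1
      · simpa using e2
      · rfl
  exact key (a+b) a b M le_rfl

lemma Cd_zero (N : ℕ) : Cd 0 N = if N = 0 then 1 else 0 := by
  split_ifs with h
  · subst h
    exact pc_zero_pos (by simp)
  · apply pc_eq_zero
    rintro s hs hpos ⟨_, hb⟩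
    have hne : s ≠ 0 := fun h0 => h (by rw [← hs, h0]; simp)
    rcases Multiset.exists_mem_of_ne_zero hne with ⟨x, hx⟩
    have := hpos x hx
    have := hb x hx
    omega

lemma Cd_succ (m N : ℕ) :
    Cd (m+1) N = Cd m N + (if m+1 ≤ N then Cd m (N - (m+1)) else 0) := by
  rw [Cd, pc_split N _ (fun s => (m+1) ∈ s)]
  have h1 : pc N (fun s => (s.Nodup ∧ ∀ x ∈ s, x ≤ m+1) ∧ (m+1) ∉ s) = Cd m N := by
    apply pc_congr
    intro s hs hpos
    constructor
    · rintro ⟨⟨hn, hb⟩, hm⟩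
      refine ⟨hn, fun x hx => ?_⟩
      have := hb x hx
      have : x ≠ m+1 := fun h => hm (h ▸ hx)
      omega
    · rintro ⟨hn, hb⟩
      exact ⟨⟨hn, fun x hx => by have := hb x hx; omega⟩, fun hm => by have := hb _ hm; omega⟩
  have h2 : pc N (fun s => (s.Nodup ∧ ∀ x ∈ s, x ≤ m+1) ∧ (m+1) ∈ s)
      = (if m+1 ≤ N then Cd m (N - (m+1)) else 0) := by
    split_ifs with h
    · have he := pc_erase (n := N) (m+1) (by omega) h
        (fun s => s.Nodup ∧ ∀ x ∈ s, x ≤ m+1)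
      rw [pc_congr (fun s hs hpos => ?_), he, Cd]
      · apply pc_congr
        intro s hs hpos
        rw [Multiset.nodup_cons]
        constructor
        · rintro ⟨⟨hm', hn⟩, hb⟩
          refine ⟨hn, fun x hx => ?_⟩
          have := hb x (Multiset.mem_cons_of_mem hx)
          have : x ≠ m+1 := fun hh => hm' (hh ▸ hx)
          omega
        · rintro ⟨hn, hb⟩
          refine ⟨⟨fun hm' => by have := hb _ hm'; omega, hn⟩, fun x hx => ?_⟩
          rcases Multiset.mem_cons.mp hx with rfl | hx
          · omega
          · have := hb x hx; omega
      · tauto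
    · apply pc_eq_zero
      rintro s hs hpos ⟨_, hm'⟩
      have h3 := Multiset.le_sum_of_mem hm'
      rw [hs] at h3
      omega
  omega

noncomputable def Tt (m j N : ℕ) : ℕ :=
  if m - j ≤ N ∧ (N - (m - j)) % 2 = 0 then Bc (m-j) j ((N - (m-j))/2) else 0

noncomputable def Pa (m j N : ℕ) : ℕ :=
  if m + 1 - j ≤ N ∧ (N - (m+1-j)) % 2 = 0 then Bc (m+1-j) (j-1) ((N-(m+1-j))/2) else 0

noncomputable def Pb (m j N : ℕ) : ℕ :=
  if m+1+j ≤ N ∧ (N - (m+1) - j) % 2 = 0 then Bc (m-j) j ((N-(m+1)-j)/2) else 0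

lemma Bc_b_zero' (a M : ℕ) : Bc a 0 M = if M = 0 then 1 else 0 := by
  split_ifs with h
  · subst h; exact Bc_M_zero a 0
  · exact Bc_b_zero a M h

lemma L_claim (m N j : ℕ) (h1 : 1 ≤ j) (h2 : j ≤ m+1) :
    Tt (m+1) j N = Pa m j N + (if j ≤ m then Pb m j N else 0) := by
  obtain ⟨j', rfl⟩ : ∃ j', j = j'+1 := ⟨j-1, by omega⟩
  unfold Tt Pa Pb
  by_cases hc : m+1-(j'+1) ≤ N ∧ (N - (m+1-(j'+1))) % 2 = 0
  · rw [if_pos hc, if_pos hc, Bc_succ_b]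
    congr 1
    by_cases hm : j'+1 ≤ m
    · by_cases hd : m+1+(j'+1) ≤ N ∧ (N-(m+1)-(j'+1)) % 2 = 0
      · rw [if_pos hm, if_pos hd, if_pos (by constructor <;> omega)]
        have e1 : m+1-(j'+1)-1 = m-(j'+1) := by omega
        have e2 : (N - (m+1-(j'+1)))/2 - (j'+1) = (N-(m+1)-(j'+1))/2 := by omega
        rw [e1, e2]
      · rw [if_pos hm, if_neg hd, if_neg (by intro hcon; apply hd; constructor <;> omega)]
    · rw [if_neg hm, if_neg (by intro hcon; omega)]
  · rw [if_neg hc, if_neg hc, zero_add]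
    by_cases hm : j'+1 ≤ m
    · rw [if_pos hm, if_neg (by intro hcon; apply hc; constructor <;> omega)]
    · rw [if_neg hm]

lemma L_pa (m N i : ℕ) (hi : i ≤ m) : Pa m (i+1) N = Tt m i N := by
  unfold Pa Tt
  have e : m+1-(i+1) = m - i := by omega
  rw [e]
  norm_num

lemma L_pb0 (m N : ℕ) : Tt (m+1) 0 N = Pb m 0 N := by
  unfold Tt Pb
  simp only [Nat.sub_zero, Nat.add_zero]
  by_cases h : m+1 ≤ N ∧ (N - (m+1)) % 2 = 0
  · rw [if_pos h, if_pos h, Bc_b_zero', Bc_b_zero']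
  · rw [if_neg h, if_neg h]

lemma L_pbrefl (m N j : ℕ) (hj : j ≤ m) :
    Pb m (m - j) N = if m+1 ≤ N then Tt m j (N - (m+1)) else 0 := by
  unfold Pb Tt
  have e : m - (m - j) = j := by omega
  rw [e, Bc_symm]
  by_cases hN : m+1 ≤ N
  · rw [if_pos hN]
    by_cases hc : m+1+(m-j) ≤ N ∧ (N - (m+1) - (m-j)) % 2 = 0
    · rw [if_pos hc, if_pos (by constructor <;> omega)]
    · rw [if_neg hc, if_neg (by intro hcon; apply hc; constructor <;> omega)]
  · rw [if_neg hN, if_neg (by intro hcon; omega)]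

theorem main_ind (m : ℕ) : ∀ N, Cd m N = ∑ j ∈ Finset.range (m+1), Tt m j N := by
  induction m with
  | zero =>
    intro N
    rw [Finset.sum_range_one, Cd_zero]
    unfold Tt
    simp only [Nat.sub_zero]
    by_cases h : N = 0
    · subst h; simp [Bc_M_zero]
    · rw [if_neg h]
      by_cases h2 : N % 2 = 0
      · rw [if_pos ⟨Nat.zero_le N, h2⟩, Bc_a_zero _ _ (by omega)]
      · rw [if_neg (by tauto)]
  | succ m ih =>
    intro N
    rw [Cd_succ, ih N]
    have ihN : (if m+1 ≤ N then Cd m (N-(m+1)) else 0)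
        = if m+1 ≤ N then ∑ j ∈ Finset.range (m+1), Tt m j (N-(m+1)) else 0 := by
      split_ifs with h
      · rw [ih]
      · rfl
    rw [ihN]
    rw [Finset.sum_range_succ' (fun j => Tt (m+1) j N) (m+1)]
    have hterm : ∀ i ∈ Finset.range (m+1),
        Tt (m+1) (i+1) N = Tt m i N + (if i+1 ≤ m then Pb m (i+1) N else 0) := by
      intro i hi
      rw [Finset.mem_range] at hi
      rw [L_claim m N (i+1) (by omega) (by omega), L_pa m N i (by omega)]
    rw [Finset.sum_congr rfl hterm, Finset.sum_add_distrib]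
    have hsum2 : (∑ i ∈ Finset.range (m+1), (if i+1 ≤ m then Pb m (i+1) N else 0))
        + Tt (m+1) 0 N = ∑ j ∈ Finset.range (m+1), Pb m j N := by
      rw [Finset.sum_range_succ]
      rw [if_neg (by omega), add_zero]
      have : ∀ i ∈ Finset.range m, (if i+1 ≤ m then Pb m (i+1) N else 0) = Pb m (i+1) N := by
        intro i hi
        rw [Finset.mem_range] at hi
        rw [if_pos (by omega)]
      rw [Finset.sum_congr rfl this, L_pb0]
      rw [Finset.sum_range_succ' (fun j => Pb m j N) m]
    have hsum3 : ∑ j ∈ Finset.range (m+1), Pb m j N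
        = if m+1 ≤ N then ∑ j ∈ Finset.range (m+1), Tt m j (N-(m+1)) else 0 := by
      rw [← Finset.sum_range_reflect (fun j => Pb m j N) (m+1)]
      have : ∀ j ∈ Finset.range (m+1),
          Pb m (m+1-1-j) N = if m+1 ≤ N then Tt m j (N - (m+1)) else 0 := by
        intro j hj
        rw [Finset.mem_range] at hj
        have e : m+1-1-j = m - j := by omega
        rw [e, L_pbrefl m N j (by omega)]
      rw [Finset.sum_congr rfl this]
      split_ifs with h
      · rfl
      · exact Finset.sum_const_zero
    omega

lemma sup_mem_of_ne_zero {s : Multiset ℕ} (h : s ≠ 0) : s.sup ∈ s := by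
  induction s using Multiset.induction with
  | empty => exact absurd rfl h
  | cons a t ih =>
    rw [Multiset.sup_cons]
    rcases max_choice a t.sup with hm | hm
    · rw [hm]; exact Multiset.mem_cons_self a t
    · rw [hm]
      rcases eq_or_ne t 0 with rfl | ht
      · simp at hm ⊢
        omega
      · exact Multiset.mem_cons_of_mem (ih ht)

lemma sum_ge_of_mem {s : Multiset ℕ} (hpos : ∀ x ∈ s, 0 < x) {a : ℕ} (ha : a ∈ s) :
    a + (Multiset.card s - 1) ≤ s.sum := by
  obtain ⟨t, rfl⟩ := Multiset.exists_cons_of_mem ha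
  have h1 : Multiset.card t ≤ t.sum :=
    card_le_sum_of_pos (fun x hx => hpos x (Multiset.mem_cons_of_mem hx))
  simp only [Multiset.sum_cons, Multiset.card_cons]
  omega

lemma odd_sum_parity {s : Multiset ℕ} (h : ∀ x ∈ s, Odd x) :
    s.sum % 2 = Multiset.card s % 2 := by
  induction s using Multiset.induction with
  | empty => simp
  | cons a t ih =>
    have ha := h a (Multiset.mem_cons_self a t)
    rw [Nat.odd_iff] at ha
    have ih' := ih (fun x hx => h x (Multiset.mem_cons_of_mem hx))
    simp only [Multiset.sum_cons, Multiset.card_cons]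
    omega

lemma pc_fiber (n k : ℕ) (Q : Multiset ℕ → Prop) (f : Multiset ℕ → ℕ)
    (h : ∀ s, s.sum = n → (∀ x ∈ s, 0 < x) → Q s → f s < k+1) :
    pc n Q = ∑ e ∈ Finset.range (k+1), pc n (fun s => Q s ∧ f s = e) := by
  classical
  rw [pc, Nat.card_eq_fintype_card, Fintype.card_subtype]
  rw [Finset.card_eq_sum_card_fiberwise
    (f := fun p : n.Partition => f p.parts) (t := Finset.range (k+1)) ?_]
  · apply Finset.sum_congr rfl
    intro e _
    rw [pc, Nat.card_eq_fintype_card, Fintype.card_subtype, Finset.filter_filter]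
  · intro p hp
    rw [Finset.mem_coe, Finset.mem_filter] at hp
    rw [Finset.mem_coe, Finset.mem_range]
    exact h p.parts p.parts_sum (fun x hx => p.parts_pos hx) hp.2

-- D-side
lemma D_eq (n k : ℕ) (hk : 1 ≤ k) (hkn : k ≤ n) :
    pc n (fun s => s.Nodup ∧ s.sup = k) = Cd (k-1) (n-k) := by
  have h1 : pc n (fun s => s.Nodup ∧ s.sup = k)
      = pc n (fun s => k ∈ s ∧ (s.Nodup ∧ ∀ x ∈ s, x ≤ k)) := by
    apply pc_congr
    intro s hs hpos
    constructor
    · rintro ⟨hn, hsup⟩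
      have hne : s ≠ 0 := by
        intro h0
        rw [h0] at hsup
        simp [Multiset.sup_zero] at hsup
        omega
      have hmem := sup_mem_of_ne_zero hne
      rw [hsup] at hmem
      exact ⟨hmem, hn, fun x hx => hsup ▸ Multiset.le_sup hx⟩
    · rintro ⟨hm, hn, hb⟩
      refine ⟨hn, le_antisymm (Multiset.sup_le.mpr hb) (Multiset.le_sup hm)⟩
  rw [h1, pc_erase k (by omega) hkn, Cd]
  apply pc_congr
  intro s hs hpos
  rw [Multiset.nodup_cons]
  constructor
  · rintro ⟨⟨hm, hn⟩, hb⟩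
    refine ⟨hn, fun x hx => ?_⟩
    have := hb x (Multiset.mem_cons_of_mem hx)
    have : x ≠ k := fun hh => hm (hh ▸ hx)
    omega
  · rintro ⟨hn, hb⟩
    refine ⟨⟨fun hm => by have := hb _ hm; omega, hn⟩, fun x hx => ?_⟩
    rcases Multiset.mem_cons.mp hx with rfl | hx
    · omega
    · have := hb x hx; omega

lemma D_zero_k (n : ℕ) (hn : 0 < n) : pc n (fun s => s.Nodup ∧ s.sup = 0) = 0 := by
  apply pc_eq_zero
  rintro s hs hpos ⟨_, hsup⟩
  have hne : s ≠ 0 := fun h0 => by rw [h0] at hs; simp at hs; omega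
  rcases Multiset.exists_mem_of_ne_zero hne with ⟨x, hx⟩
  have h1 := hpos x hx
  have h2 := Multiset.le_sup (α := ℕ) hx
  rw [hsup] at h2
  omega

lemma D_big_k (n k : ℕ) (hk : 1 ≤ k) (hnk : n < k) :
    pc n (fun s => s.Nodup ∧ s.sup = k) = 0 := by
  apply pc_eq_zero
  rintro s hs hpos ⟨_, hsup⟩
  have hne : s ≠ 0 := by
    intro h0; rw [h0] at hsup; simp [Multiset.sup_zero] at hsup; omega
  have hmem := sup_mem_of_ne_zero hne
  rw [hsup] at hmem
  have := Multiset.le_sum_of_mem hmem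
  omega

lemma O_fiber_zero (n k : ℕ) (hn : 0 < n) :
    pc n (fun s => ((∀ i ∈ s, Odd i) ∧ s.sup + 2 * Multiset.card s = 2*k+1)
      ∧ Multiset.card s = 0) = 0 := by
  apply pc_eq_zero
  rintro s hs hpos ⟨_, hcard⟩
  rw [Multiset.card_eq_zero] at hcard
  rw [hcard] at hs
  simp at hs
  omega

lemma O_fiber (n k e : ℕ) (hn : 0 < n) (hk : 1 ≤ k) (hkn : k ≤ n) (he1 : 1 ≤ e) (hek : e ≤ k) :
    pc n (fun s => ((∀ i ∈ s, Odd i) ∧ s.sup + 2 * Multiset.card s = 2*k+1)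
      ∧ Multiset.card s = e) = Tt (k-1) (e-1) (n-k) := by
  have ha : 2*(k-e)+1 = 2*k+1 - 2*e := by omega
  have step1 : pc n (fun s => ((∀ i ∈ s, Odd i) ∧ s.sup + 2 * Multiset.card s = 2*k+1)
        ∧ Multiset.card s = e)
      = pc n (fun s => (2*(k-e)+1) ∈ s ∧ (Multiset.card s = e
        ∧ (∀ x ∈ s, x ≤ 2*(k-e)+1) ∧ (∀ x ∈ s, Odd x))) := by
    apply pc_congr
    intro s hs hpos
    constructor
    · rintro ⟨⟨hodd, hstat⟩, hcard⟩
      have hne : s ≠ 0 := by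
        intro h0; rw [h0] at hcard; simp at hcard; omega
      have hmem := sup_mem_of_ne_zero hne
      have hsupv : s.sup = 2*(k-e)+1 := by omega
      rw [hsupv] at hmem
      refine ⟨hmem, hcard, fun x hx => ?_, hodd⟩
      have := Multiset.le_sup (α := ℕ) hx
      omega
    · rintro ⟨hmem, hcard, hb, hodd⟩
      have hsup : s.sup = 2*(k-e)+1 :=
        le_antisymm (Multiset.sup_le.mpr hb) (Multiset.le_sup hmem)
      exact ⟨⟨hodd, by omega⟩, hcard⟩
  by_cases hA : 2*k ≤ n + e
  · have han : 2*(k-e)+1 ≤ n := by omega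
    rw [step1, pc_erase _ (by omega) han]
    have step2 : pc (n - (2*(k-e)+1)) (fun s => Multiset.card ((2*(k-e)+1) ::ₘ s) = e
          ∧ (∀ x ∈ ((2*(k-e)+1) ::ₘ s), x ≤ 2*(k-e)+1) ∧ (∀ x ∈ ((2*(k-e)+1) ::ₘ s), Odd x))
        = pc (n - (2*(k-e)+1)) (fun s => Multiset.card s = e - 1
          ∧ (∀ x ∈ s, x ≤ 2*(k-e)+1) ∧ (∀ x ∈ s, 2 ∣ x - 1)) := by
      apply pc_congr
      intro s hs hpos
      simp only [Multiset.card_cons, Multiset.mem_cons]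
      constructor
      · rintro ⟨hc, hb, ho⟩
        refine ⟨by omega, fun x hx => hb x (Or.inr hx), fun x hx => ?_⟩
        have := ho x (Or.inr hx)
        rw [Nat.odd_iff] at this
        omega
      · rintro ⟨hc, hb, ho⟩
        refine ⟨by omega, fun x hx => ?_, fun x hx => ?_⟩
        · rcases hx with rfl | hx
          · omega
          · exact hb x hx
        · rcases hx with rfl | hx
          · exact ⟨k - e, by omega⟩
          · have h1 := ho x hx
            have h2 := hpos x hx
            rw [Nat.odd_iff]
            omega
    rw [step2]
    by_cases hP : (n - (2*(k-e)+1) - (e-1)) % 2 = 0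
    · have hM : n - (2*(k-e)+1) = 2 * ((n - (2*(k-e)+1) - (e-1))/2) + (e-1) := by omega
      rw [hM, pc_scale 2 (k-e) (e-1) _ (by omega)]
      unfold Tt
      rw [if_pos (by constructor <;> omega)]
      have e1 : k-1-(e-1) = k-e := by omega
      have e2 : (n-k-(k-e))/2 = (n - (2*(k-e)+1) - (e-1))/2 := by omega
      rw [e1, e2]
      rfl
    · unfold Tt
      rw [if_neg (by intro hcon; apply hP; omega)]
      apply pc_eq_zero
      rintro s hs hpos ⟨hc, _, hd⟩
      have hparity : s.sum % 2 = Multiset.card s % 2 := by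
        apply odd_sum_parity
        intro x hx
        have := hd x hx
        have := hpos x hx
        rw [Nat.odd_iff]
        omega
      rw [hs, hc] at hparity
      omega
  · rw [step1]
    unfold Tt
    rw [if_neg (by intro hcon; omega)]
    apply pc_eq_zero
    rintro s hs hpos ⟨hmem, hcard, _, _⟩
    have := sum_ge_of_mem hpos hmem
    rw [hs, hcard] at this
    omega

lemma O_eq (n k : ℕ) (hn : 0 < n) (hk : 1 ≤ k) (hkn : k ≤ n) :
    pc n (fun s => (∀ i ∈ s, Odd i) ∧ s.sup + 2 * Multiset.card s = 2*k+1)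
      = ∑ j ∈ Finset.range k, Tt (k-1) j (n-k) := by
  rw [pc_fiber n k _ (fun s => Multiset.card s) ?_]
  · rw [Finset.sum_range_succ' _ k, O_fiber_zero n k hn, add_zero]
    apply Finset.sum_congr rfl
    intro i hi
    rw [Finset.mem_range] at hi
    rw [O_fiber n k (i+1) hn hk hkn (by omega) (by omega)]
    norm_num
  · rintro s hs hpos ⟨hodd, hstat⟩
    have hne : s ≠ 0 := fun h0 => by rw [h0] at hs; simp at hs; omega
    have hmem := sup_mem_of_ne_zero hne
    have := hpos _ hmem
    show Multiset.card s < k + 1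
    omega

lemma O_zero_k (n : ℕ) (hn : 0 < n) :
    pc n (fun s => (∀ i ∈ s, Odd i) ∧ s.sup + 2 * Multiset.card s = 2*0+1) = 0 := by
  apply pc_eq_zero
  rintro s hs hpos ⟨_, hstat⟩
  have hne : s ≠ 0 := fun h0 => by rw [h0] at hs; simp at hs; omega
  have hmem := sup_mem_of_ne_zero hne
  have h1 := hpos _ hmem
  have h2 := Multiset.card_pos.mpr hne
  omega

lemma O_big_k (n k : ℕ) (hn : 0 < n) (hnk : n < k) :
    pc n (fun s => (∀ i ∈ s, Odd i) ∧ s.sup + 2 * Multiset.card s = 2*k+1) = 0 := by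
  apply pc_eq_zero
  rintro s hs hpos ⟨_, hstat⟩
  have hne : s ≠ 0 := fun h0 => by rw [h0] at hs; simp at hs; omega
  have hmem := sup_mem_of_ne_zero hne
  have h1 := sum_ge_of_mem hpos hmem
  have h2 := card_le_sum_of_pos hpos
  rw [hs] at h1 h2
  omega


theorem fine_refinement (n k : ℕ) (hn : 0 < n) :
    Nat.card {p : n.Partition // p.parts.Nodup ∧ p.parts.sup = k} =
      Nat.card {p : n.Partition // (∀ i ∈ p.parts, Odd i) ∧
        p.parts.sup + 2 * p.parts.card = 2 * k + 1} := by
  have hL : Nat.card {p : n.Partition // p.parts.Nodup ∧ p.parts.sup = k}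
      = pc n (fun s => s.Nodup ∧ s.sup = k) := rfl
  have hR : Nat.card {p : n.Partition // (∀ i ∈ p.parts, Odd i) ∧
        p.parts.sup + 2 * p.parts.card = 2 * k + 1}
      = pc n (fun s => (∀ i ∈ s, Odd i) ∧ s.sup + 2 * Multiset.card s = 2*k+1) := rfl
  rw [hL, hR]
  rcases Nat.eq_zero_or_pos k with rfl | hk
  · rw [D_zero_k n hn, O_zero_k n hn]
  rcases Nat.lt_or_ge n k with h | h
  · rw [D_big_k n k hk h, O_big_k n k hn h]
  · have hkk : k - 1 + 1 = k := by omega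
    rw [D_eq n k hk h, O_eq n k hn hk h, main_ind, hkk]
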